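/- Let n ≥ 1 and let M ∈ ℝ^{n×n} be a matrix that is weakly diagonally dominant, whose diagonal entries are all negative, whose first super-diagonal and first sub-diagonal entries are all nonzero (M_{i,i+1} ≠ 0 and M_{i+1,i} ≠ 0 for all i = 1,…,n−1), and which has at least one strictly diagonally dominant row. Then M is stable: every complex eigenvalue λ of M satisfies Re λ < 0. -/

import Mathlib

open Finset

/-- A real square matrix that is weakly diagonally dominant with negative diagonal
entries, all first super- and sub-diagonal entries nonzero, and at least one strictly
diagonally dominant row is stable: every complex eigenvalue has negative real part. -/
theorem weakly_diag_dominant_neg_diag_strongly_connected_stable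
    {n : ℕ} (hn : 1 ≤ n) (M : Matrix (Fin n) (Fin n) ℝ)
    (hdd : ∀ i, ∑ j ∈ Finset.univ.erase i, |M i j| ≤ |M i i|)
    (hdiag : ∀ i, M i i < 0)
    (hoff : ∀ i j : Fin n, (j : ℕ) = (i : ℕ) + 1 → M i j ≠ 0 ∧ M j i ≠ 0)
    (hstrict : ∃ i, ∑ j ∈ Finset.univ.erase i, |M i j| < |M i i|)
    (μ : ℂ) (v : Fin n → ℂ) (hv : v ≠ 0)
    (heig : (M.map (fun x : ℝ => (x : ℂ))).mulVec v = μ • v) :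
    μ.re < 0 := by
  by_contra hre
  push_neg at hre
  -- choose index of maximal modulus
  obtain ⟨i₀, -, hi₀⟩ :=
    Finset.exists_max_image Finset.univ (fun j => ‖v j‖)
      ⟨⟨0, hn⟩, Finset.mem_univ _⟩
  set m : ℝ := ‖v i₀‖ with hm
  have hmax : ∀ j, ‖v j‖ ≤ m := fun j => hi₀ j (Finset.mem_univ j)
  have hmpos : 0 < m := by
    obtain ⟨j, hj⟩ := Function.ne_iff.mp hv
    have : 0 < ‖v j‖ := by
      simpa using hj
    exact lt_of_lt_of_le this (hmax j)
  -- the row equation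
  have hrow : ∀ k : Fin n,
      ∑ j ∈ Finset.univ.erase k, ((M k j : ℂ) * v j) = (μ - (M k k : ℂ)) * v k := by
    intro k
    have h1 := congrFun heig k
    have h2 : ∑ j, (M k j : ℂ) * v j = μ * v k := by
      simpa [Matrix.mulVec, dotProduct, Matrix.map_apply] using h1
    have h3 := Finset.add_sum_erase Finset.univ (fun j => (M k j : ℂ) * v j)
      (Finset.mem_univ k)
    have h4 : (M k k : ℂ) * v k + ∑ j ∈ Finset.univ.erase k, ((M k j : ℂ) * v j)
        = μ * v k := by rw [h3, h2]
    linear_combination h4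
  -- key lemma: at an index of maximal modulus, the row is tight
  have key : ∀ k : Fin n, ‖v k‖ = m →
      (|M k k| ≤ ∑ j ∈ Finset.univ.erase k, |M k j|) ∧
      (∀ j ∈ Finset.univ.erase k, M k j ≠ 0 → ‖v j‖ = m) := by
    intro k hk
    have hB : |M k k| ≤ ‖μ - (M k k : ℂ)‖ := by
      have h1 : (μ - (M k k : ℂ)).re ≤ ‖μ - (M k k : ℂ)‖ :=
        Complex.re_le_norm _
      have h2 : (μ - (M k k : ℂ)).re = μ.re - M k k := by simp
      rw [abs_of_neg (hdiag k)]
      linarith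
    have hS1 : ‖μ - (M k k : ℂ)‖ * m ≤
        ∑ j ∈ Finset.univ.erase k, |M k j| * ‖v j‖ := by
      calc ‖μ - (M k k : ℂ)‖ * m
          = ‖(μ - (M k k : ℂ)) * v k‖ := by rw [norm_mul, hk]
        _ = ‖∑ j ∈ Finset.univ.erase k, ((M k j : ℂ) * v j)‖ := by
            rw [hrow k]
        _ ≤ ∑ j ∈ Finset.univ.erase k, ‖(M k j : ℂ) * v j‖ :=
            norm_sum_le _ _
        _ = ∑ j ∈ Finset.univ.erase k, |M k j| * ‖v j‖ := by
            refine Finset.sum_congr rfl fun j _ => ?_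
            rw [norm_mul, Complex.norm_real, Real.norm_eq_abs]
    have hptle : ∀ j ∈ Finset.univ.erase k,
        |M k j| * ‖v j‖ ≤ |M k j| * m :=
      fun j _ => mul_le_mul_of_nonneg_left (hmax j) (abs_nonneg _)
    have hS2 : ∑ j ∈ Finset.univ.erase k, |M k j| * ‖v j‖ ≤
        (∑ j ∈ Finset.univ.erase k, |M k j|) * m := by
      rw [Finset.sum_mul]
      exact Finset.sum_le_sum hptle
    have hS3 : (∑ j ∈ Finset.univ.erase k, |M k j|) * m ≤ |M k k| * m :=
      mul_le_mul_of_nonneg_right (hdd k) hmpos.le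
    have hBm : |M k k| * m ≤ ‖μ - (M k k : ℂ)‖ * m :=
      mul_le_mul_of_nonneg_right hB hmpos.le
    -- everything is equal
    have hAR : |M k k| ≤ ∑ j ∈ Finset.univ.erase k, |M k j| := by
      have : |M k k| * m ≤ (∑ j ∈ Finset.univ.erase k, |M k j|) * m := by linarith
      exact le_of_mul_le_mul_right this hmpos
    refine ⟨hAR, ?_⟩
    have hsumeq : ∑ j ∈ Finset.univ.erase k, |M k j| * ‖v j‖ =
        ∑ j ∈ Finset.univ.erase k, |M k j| * m := by
      have h1 : (∑ j ∈ Finset.univ.erase k, |M k j|) * m =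
          ∑ j ∈ Finset.univ.erase k, |M k j| * m := Finset.sum_mul _ _ _
      linarith
    have hpt := (Finset.sum_eq_sum_iff_of_le hptle).mp hsumeq
    intro j hj hMkj
    have := hpt j hj
    exact mul_left_cancel₀ (abs_ne_zero.mpr hMkj) this
  -- propagation of maximality
  have step_up : ∀ j k : Fin n, (k : ℕ) = (j : ℕ) + 1 →
      ‖v j‖ = m → ‖v k‖ = m := by
    intro j k hjk hj
    have hne : k ≠ j := by
      intro h; rw [h] at hjk; omega
    exact (key j hj).2 k (Finset.mem_erase.mpr ⟨hne, Finset.mem_univ _⟩)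
      (hoff j k hjk).1
  have step_down : ∀ j k : Fin n, (j : ℕ) = (k : ℕ) + 1 →
      ‖v j‖ = m → ‖v k‖ = m := by
    intro j k hjk hj
    have hne : k ≠ j := by
      intro h; rw [h] at hjk; omega
    exact (key j hj).2 k (Finset.mem_erase.mpr ⟨hne, Finset.mem_univ _⟩)
      (hoff k j hjk).2
  -- all indices have maximal modulus
  have hup : ∀ d : ℕ, ∀ k : Fin n, (k : ℕ) = (i₀ : ℕ) + d → ‖v k‖ = m := by
    intro d
    induction d with
    | zero =>
        intro k hk
        have : k = i₀ := Fin.ext (by omega)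
        rw [this]
    | succ d ih =>
        intro k hk
        have hlt : (i₀ : ℕ) + d < n := by have := k.isLt; omega
        exact step_up ⟨(i₀ : ℕ) + d, hlt⟩ k (by simp; omega) (ih ⟨(i₀ : ℕ) + d, hlt⟩ rfl)
  have hdown : ∀ d : ℕ, ∀ k : Fin n, (k : ℕ) + d = (i₀ : ℕ) → ‖v k‖ = m := by
    intro d
    induction d with
    | zero =>
        intro k hk
        have : k = i₀ := Fin.ext (by omega)
        rw [this]
    | succ d ih =>
        intro k hk
        have hlt : (k : ℕ) + 1 < n := by have := i₀.isLt; omega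
        exact step_down ⟨(k : ℕ) + 1, hlt⟩ k rfl (ih ⟨(k : ℕ) + 1, hlt⟩ (by simp; omega))
  have hall : ∀ k : Fin n, ‖v k‖ = m := by
    intro k
    rcases le_or_gt (i₀ : ℕ) (k : ℕ) with h | h
    · exact hup ((k : ℕ) - (i₀ : ℕ)) k (by omega)
    · exact hdown ((i₀ : ℕ) - (k : ℕ)) k (by omega)
  -- contradiction at the strictly dominant row
  obtain ⟨i, hi⟩ := hstrict
  have := (key i (hall i)).1
  linarith
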